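/- Let 𝒢 → M be a locally trivial group bundle with 2-cocycle ω and Haar measure λ on the fiber group, and let F ⊆ M be closed. If f ∈ C_c(𝒢) vanishes on 𝒢|_F = π⁻¹(F), then f lies in the closed ideal I_F of C*(𝒢, ω), i.e., f is a limit (in the I-norm, hence in the C*-norm) of elements of the form φ·f with φ ∈ C₀(M∖F). Concretely: for every ε > 0 there exists φ ∈ C₀(M) with 0 ≤ φ ≤ 1, φ = 0 on F, and ‖f − φ·f‖_I < ε. -/

import Mathlib

/-- A locally trivial bundle of locally compact groups with fiber group `G`:
`π : 𝒢 → M` is a continuous open surjection, each fiber `π⁻¹(m)` is identified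
with `G` via `φ m`, and locally `π⁻¹(U)` is homeomorphic to `U × G` compatibly
with `π` and the fiber identifications. -/
structure GroupBundle (𝒢 M G : Type*) [TopologicalSpace 𝒢] [TopologicalSpace M]
    [TopologicalSpace G] [Group G] [IsTopologicalGroup G] where
  π : 𝒢 → M
  continuous_π : Continuous π
  isOpenMap_π : IsOpenMap π
  surjective_π : Function.Surjective π
  φ : (m : M) → {x : 𝒢 // π x = m} ≃ G
  locTriv : ∀ m : M, ∃ U : Set M, IsOpen U ∧ m ∈ U ∧
    ∃ h : (π ⁻¹' U) ≃ₜ (U × G),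
      ∀ x : π ⁻¹' U, ((h x).1 : M) = π x.1 ∧ (h x).2 = φ (π x.1) ⟨x.1, rfl⟩

namespace GroupBundle

variable {𝒢 M G : Type*} [TopologicalSpace 𝒢] [TopologicalSpace M]
  [TopologicalSpace G] [Group G] [IsTopologicalGroup G]

/-- The element of the fiber over `m` with `G`-coordinate `g`. -/
def elt (B : GroupBundle 𝒢 M G) (m : M) (g : G) : 𝒢 := ((B.φ m).symm g).1

lemma π_elt (B : GroupBundle 𝒢 M G) (m : M) (g : G) : B.π (B.elt m g) = m :=
  ((B.φ m).symm g).2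

/-- The `G`-coordinate of a point of `𝒢`. -/
def coord (B : GroupBundle 𝒢 M G) (x : 𝒢) : G := B.φ (B.π x) ⟨x, rfl⟩

/-- The set of composable pairs `𝒢⁽²⁾ = {(x,y) : π x = π y}`. -/
def comp2 (B : GroupBundle 𝒢 M G) : Set (𝒢 × 𝒢) := {p | B.π p.1 = B.π p.2}

/-- Fiberwise multiplication, defined via the identifications of the fibers with `G`. -/
noncomputable def mul (B : GroupBundle 𝒢 M G) (p : B.comp2) : 𝒢 :=
  B.elt (B.π p.1.1) (B.coord p.1.1 * B.coord p.1.2)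

/-- Fiberwise inversion, defined via the identifications of the fibers with `G`. -/
noncomputable def inv (B : GroupBundle 𝒢 M G) (x : 𝒢) : 𝒢 :=
  B.elt (B.π x) (B.coord x)⁻¹

end GroupBundle


open MeasureTheory
open scoped ZeroAtInfty

namespace GroupBundle

variable {𝒢 M G : Type*} [TopologicalSpace 𝒢] [TopologicalSpace M]
  [TopologicalSpace G] [Group G] [IsTopologicalGroup G]

/-- The `I`-norm
`‖f‖_I = max { sup_m ∫_{𝒢ₘ} |f(x)| dλ(x), sup_m ∫_{𝒢ₘ} |f(x⁻¹)| dλ(x) }`,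
the fiber integrals being computed in the `G`-coordinates of the fibers. -/
noncomputable def Inorm [MeasurableSpace G] (B : GroupBundle 𝒢 M G) (μ : Measure G)
    (f : 𝒢 → ℂ) : ℝ :=
  max (⨆ m : M, ∫ g : G, ‖f (B.elt m g)‖ ∂μ)
      (⨆ m : M, ∫ g : G, ‖f (B.elt m g⁻¹)‖ ∂μ)

end GroupBundle


namespace GroupBundle

theorem coord_elt' {𝒢 M G : Type*} [TopologicalSpace 𝒢] [TopologicalSpace M]
    [TopologicalSpace G] [Group G] [IsTopologicalGroup G]
    (B : GroupBundle 𝒢 M G) (m : M) (g : G) : B.coord (B.elt m g) = g := by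
  have key : ∀ (x : 𝒢) (m' : M) (h : B.π x = m'), B.φ (B.π x) ⟨x, rfl⟩ = B.φ m' ⟨x, h⟩ := by
    rintro x m' rfl; rfl
  have h1 : B.coord (B.elt m g) = B.φ m ⟨B.elt m g, B.π_elt m g⟩ :=
    key (B.elt m g) m (B.π_elt m g)
  rw [h1, show (⟨B.elt m g, B.π_elt m g⟩ : {x // B.π x = m}) = (B.φ m).symm g from
    Subtype.ext rfl, Equiv.apply_symm_apply]

end GroupBundle

/-- for a locally trivial group bundle with Haar measure `μ` on the fiber
group and a closed set `F ⊆ M`, any `f ∈ C_c(𝒢)` vanishing on `𝒢|_F = π⁻¹(F)` is an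
`I`-norm limit of functions `φ·f` with `φ ∈ C₀(M∖F)`: for every `ε > 0` there is
`φ ∈ C₀(M)` with `0 ≤ φ ≤ 1`, `φ = 0` on `F`, and `‖f − φ·f‖_I < ε`. -/
theorem statement14 {𝒢 M G : Type*} [TopologicalSpace 𝒢] [TopologicalSpace M]
    [TopologicalSpace G] [Group G] [IsTopologicalGroup G]
    [LocallyCompactSpace 𝒢] [T2Space 𝒢] [LocallyCompactSpace M] [T2Space M]
    [LocallyCompactSpace G] [T2Space G] [MeasurableSpace G] [BorelSpace G]
    (B : GroupBundle 𝒢 M G) (μ : Measure G) [μ.IsHaarMeasure]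
    (F : Set M) (hF : IsClosed F)
    (f : 𝒢 → ℂ) (hf : Continuous f) (hfs : HasCompactSupport f)
    (hvanish : ∀ x : 𝒢, B.π x ∈ F → f x = 0)
    (ε : ℝ) (hε : 0 < ε) :
    ∃ φ : C₀(M, ℝ), (∀ m : M, 0 ≤ φ m ∧ φ m ≤ 1) ∧ (∀ m ∈ F, φ m = 0) ∧
      B.Inorm μ (fun x => f x - (φ (B.π x) : ℂ) * f x) < ε := by
  classical
  rcases isEmpty_or_nonempty M with hM | hM
  · have h𝒢 : IsEmpty 𝒢 := ⟨fun x => hM.false (B.π x)⟩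
    refine ⟨0, by simp, by simp, ?_⟩
    simp only [GroupBundle.Inorm, Real.iSup_of_isEmpty, max_self]
    exact hε
  -- main case
  set K : Set 𝒢 := tsupport f with hK
  have hKc : IsCompact K := hfs
  -- continuity of `coord` on K
  have hcoordK : ContinuousOn B.coord K := by
    intro x hx
    obtain ⟨U, hUopen, hmU, h, hh⟩ := B.locTriv (B.π x)
    have hUo : IsOpen (B.π ⁻¹' U) := hUopen.preimage B.continuous_π
    have hcont : ContinuousOn B.coord (B.π ⁻¹' U) := by
      rw [continuousOn_iff_continuous_restrict]
      have heq : (B.π ⁻¹' U).domRestrict B.coord = fun y => (h y).2 := by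
        funext y
        exact ((hh y).2).symm
      rw [heq]
      exact continuous_snd.comp h.continuous
    exact (hcont.continuousAt (hUo.mem_nhds hmU)).continuousWithinAt
  set L : Set G := B.coord '' K with hLdef
  have hLc : IsCompact L := hKc.image_of_continuousOn hcoordK
  set L₀ : Set G := L ∪ L⁻¹ with hL₀def
  have hL₀c : IsCompact L₀ := hLc.union hLc.inv
  have hL₀meas : MeasurableSet L₀ := hL₀c.isClosed.measurableSet
  set ℓ : ℝ := (μ L₀).toReal with hℓdef
  have hℓ0 : 0 ≤ ℓ := ENNReal.toReal_nonneg
  set δ : ℝ := ε / (2 * (ℓ + 1)) with hδdef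
  have hδpos : 0 < δ := div_pos hε (by linarith)
  have hδℓ : δ * ℓ < ε := by
    have h1 : δ * (ℓ + 1) = ε / 2 := by
      rw [hδdef]; field_simp
    nlinarith
  -- the bad set
  set V : Set 𝒢 := {x | ‖f x‖ < δ} with hVdef
  have hVopen : IsOpen V := isOpen_lt hf.norm continuous_const
  set A : Set M := B.π '' (K \ V) with hAdef
  have hAc : IsCompact A := (hKc.diff hVopen).image B.continuous_π
  have hAF : Disjoint A F := by
    rw [Set.disjoint_left]
    rintro m ⟨x, ⟨hxK, hxV⟩, rfl⟩ hmF
    exact hxV (by simp [hVdef, hvanish x hmF, hδpos])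
  obtain ⟨φc, hφ1A, hφ0F, hφcs, hφIcc⟩ :=
    exists_continuous_one_zero_of_isCompact hAc hF hAF
  refine ⟨⟨φc, hφcs.is_zero_at_infty⟩, fun m => ⟨(hφIcc m).1, (hφIcc m).2⟩,
    fun m hm => hφ0F hm, ?_⟩
  -- key bound
  have main : ∀ (e : M → G → 𝒢), (∀ m g, B.π (e m g) = m) →
      (∀ m g, f (e m g) ≠ 0 → g ∈ L₀) →
      ∀ m : M, (∫ g : G, ‖f (e m g) - (φc (B.π (e m g)) : ℂ) * f (e m g)‖ ∂μ) ≤ δ * ℓ := by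
    intro e heπ heL m
    by_cases hmA : m ∈ A
    · have hz : ∀ g : G, ‖f (e m g) - (φc (B.π (e m g)) : ℂ) * f (e m g)‖ = 0 := by
        intro g
        rw [heπ m g, hφ1A hmA]
        simp
      calc (∫ g : G, ‖f (e m g) - (φc (B.π (e m g)) : ℂ) * f (e m g)‖ ∂μ)
          = ∫ (_ : G), (0 : ℝ) ∂μ := by
            apply integral_congr_ae; filter_upwards with g; exact hz g
        _ = 0 := integral_zero _ _
        _ ≤ δ * ℓ := by positivity
    · have hbound : ∀ g : G, ‖f (e m g) - (φc (B.π (e m g)) : ℂ) * f (e m g)‖ ≤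
          Set.indicator L₀ (fun _ => δ) g := by
        intro g
        by_cases hfg : f (e m g) = 0
        · rw [hfg]
          simpa using Set.indicator_nonneg (fun _ _ => hδpos.le) g
        · have hgL : g ∈ L₀ := heL m g hfg
          rw [Set.indicator_of_mem hgL]
          have hsmall : ‖f (e m g)‖ < δ := by
            by_contra hc
            exact hmA ⟨e m g, ⟨subset_tsupport f hfg, hc⟩, heπ m g⟩
          have hrw : f (e m g) - (φc (B.π (e m g)) : ℂ) * f (e m g)
              = ((1 - φc m : ℝ) : ℂ) * f (e m g) := by
            rw [heπ m g]; push_cast; ring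
          rw [hrw, norm_mul, Complex.norm_real]
          have h01 : |(1 : ℝ) - φc m| ≤ 1 := by
            rw [abs_of_nonneg (by linarith [(hφIcc m).2])]
            linarith [(hφIcc m).1]
          calc |(1 : ℝ) - φc m| * ‖f (e m g)‖ ≤ 1 * δ :=
              mul_le_mul h01 hsmall.le (norm_nonneg _) one_pos.le
            _ = δ := one_mul δ
      have hint : Integrable (Set.indicator L₀ (fun _ => δ)) μ := by
        rw [integrable_indicator_iff hL₀meas]
        exact integrableOn_const hL₀c.measure_lt_top.ne
      calc (∫ g : G, ‖f (e m g) - (φc (B.π (e m g)) : ℂ) * f (e m g)‖ ∂μ)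
          ≤ ∫ g : G, Set.indicator L₀ (fun _ => δ) g ∂μ :=
            integral_mono_of_nonneg (Filter.Eventually.of_forall fun g => norm_nonneg _)
              hint (Filter.Eventually.of_forall hbound)
        _ = (μ L₀).toReal • δ := by
            rw [integral_indicator_const (δ : ℝ) hL₀meas, measureReal_def]
        _ = δ * ℓ := by rw [smul_eq_mul, hℓdef, mul_comm]
  have hmem1 : ∀ (m : M) (g : G), f (B.elt m g) ≠ 0 → g ∈ L₀ := by
    intro m g hfg
    exact Or.inl ⟨B.elt m g, subset_tsupport f hfg, B.coord_elt' m g⟩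
  have hmem2 : ∀ (m : M) (g : G), f (B.elt m g⁻¹) ≠ 0 → g ∈ L₀ := by
    intro m g hfg
    refine Or.inr ?_
    rw [Set.mem_inv]
    exact ⟨B.elt m g⁻¹, subset_tsupport f hfg, B.coord_elt' m g⁻¹⟩
  have h1 := main B.elt (fun m g => B.π_elt m g) hmem1
  have h2 := main (fun m g => B.elt m g⁻¹) (fun m g => B.π_elt m g⁻¹) hmem2
  rw [GroupBundle.Inorm]
  apply max_lt
  · exact lt_of_le_of_lt (ciSup_le fun m => h1 m) hδℓ
  · exact lt_of_le_of_lt (ciSup_le fun m => h2 m) hδℓ
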